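/- Let A be a finite category, k^• a weighting on A, and k_• a coweighting on A. Then ∑_a k^a = ∑_a k_a, where both sums are over all objects a of A. -/
import Mathlib


open CategoryTheory

/-- **Lemma 2.1** (Leinster). For a finite category, the total weight of any
weighting equals the total coweight of any coweighting. -/
theorem stmt_8 {A : Type u} [Category.{v} A] [Fintype A]
    [∀ a b : A, Fintype (a ⟶ b)]
    (k : A → ℚ) (hk : ∀ a : A, ∑ b : A, (Fintype.card (a ⟶ b) : ℚ) * k b = 1)
    (k' : A → ℚ) (hk' : ∀ b : A, ∑ a : A, k' a * (Fintype.card (a ⟶ b) : ℚ) = 1) :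
    ∑ a : A, k a = ∑ a : A, k' a := by
  calc ∑ a : A, k a = ∑ b : A, (∑ a : A, k' a * (Fintype.card (a ⟶ b) : ℚ)) * k b := by
        simp [hk']
    _ = ∑ a : A, k' a * ∑ b : A, (Fintype.card (a ⟶ b) : ℚ) * k b := by
        simp only [Finset.sum_mul, Finset.mul_sum, mul_assoc]
        rw [Finset.sum_comm]
    _ = ∑ a : A, k' a := by simp [hk]
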